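/- Let W be a coherent sheaf on a smooth projective curve X of genus g, and let n ≥ 1, d be integers, δ = gcd(n, d) (with δ = n if d = 0), χ = d − n(g − 1). Then χ(E ⊗ W) = 0 for every vector bundle E of rank n and degree d if and only if there exists l ≥ 0 with rk(W) = l·n/δ and deg(W) = −l·χ/δ. -/

import Mathlib

/-- An abstract theory of coherent sheaves and vector bundles on a smooth projective
connected curve of genus `g` over an algebraically closed field.  `Bundle` is the type
of vector bundles (with rank `rk` and degree `deg`), `Sheaf` the type of coherent
sheaves (with rank `rkS` and degree `degS`), and `chiTensor E W = χ(E ⊗ W)`, computed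
by Riemann–Roch.  On a curve, bundles of every rank `n ≥ 1` and degree `d` exist. -/
structure CurveSheaves where
  Bundle : Type
  rk : Bundle → ℕ
  deg : Bundle → ℤ
  Sheaf : Type
  rkS : Sheaf → ℕ
  degS : Sheaf → ℤ
  g : ℕ
  chiTensor : Bundle → Sheaf → ℤ
  riemannRoch : ∀ E W, chiTensor E W =
    (rk E : ℤ) * degS W + (rkS W : ℤ) * deg E + (rk E : ℤ) * (rkS W : ℤ) * (1 - (g : ℤ))
  exists_bundle : ∀ (n : ℕ) (d : ℤ), 1 ≤ n → ∃ E, rk E = n ∧ deg E = d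

/-- Let `W` be a coherent sheaf on a smooth projective curve of genus
`g`, `n ≥ 1`, `d` integers, `δ = gcd(n, d)` (with `δ = n` if `d = 0`) and
`χ = d - n(g - 1)`.  Then `χ(E ⊗ W) = 0` for every vector bundle `E` of rank `n` and
degree `d` if and only if there is `l ≥ 0` with `rk W = l·n/δ` and
`deg W = -l·χ/δ`. -/
theorem chi_tensor_vanishing_iff (T : CurveSheaves) (n : ℕ) (d : ℤ) (hn : 1 ≤ n)
    (W : T.Sheaf) :
    (∀ E, T.rk E = n → T.deg E = d → T.chiTensor E W = 0) ↔
      ∃ l : ℕ, (T.rkS W : ℤ) * (Nat.gcd n d.natAbs : ℤ) = (l : ℤ) * (n : ℤ) ∧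
        T.degS W * (Nat.gcd n d.natAbs : ℤ) = -(l : ℤ) * (d - (n : ℤ) * ((T.g : ℤ) - 1)) := by
  set r : ℤ := (T.rkS W : ℤ) with hr
  set s : ℤ := T.degS W with hs
  set χ : ℤ := d - (n : ℤ) * ((T.g : ℤ) - 1) with hχ
  have hn0 : (n : ℤ) ≠ 0 := by exact_mod_cast Nat.one_le_iff_ne_zero.mp hn
  -- the gcd in the statement equals gcd(n, χ)
  have hgcd : Int.gcd (n : ℤ) χ = Int.gcd (n : ℤ) d := by
    apply Nat.dvd_antisymm
    · rw [← Int.natCast_dvd_natCast]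
      apply Int.dvd_coe_gcd (Int.gcd_dvd_left _ _)
      have h1 : d = χ + (n : ℤ) * ((T.g : ℤ) - 1) := by rw [hχ]; ring
      rw [h1]
      exact dvd_add (Int.gcd_dvd_right _ _) (Dvd.dvd.mul_right (Int.gcd_dvd_left _ _) _)
    · rw [← Int.natCast_dvd_natCast]
      apply Int.dvd_coe_gcd (Int.gcd_dvd_left _ _)
      rw [hχ]
      exact dvd_sub (Int.gcd_dvd_right _ _) (Dvd.dvd.mul_right (Int.gcd_dvd_left _ _) _)
  have hδeq : (Nat.gcd n d.natAbs : ℤ) = (Int.gcd (n : ℤ) χ : ℤ) := by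
    rw [hgcd]; simp [Int.gcd]
  set δ : ℤ := (Int.gcd (n : ℤ) χ : ℤ) with hδ
  have hδpos : 0 < δ := by
    have h2 : Int.gcd (n : ℤ) χ ≠ 0 := by
      simp [Int.gcd_eq_zero_iff, hn0, Nat.one_le_iff_ne_zero.mp hn]
    have h3 : 0 < Int.gcd (n : ℤ) χ := Nat.pos_of_ne_zero h2
    rw [hδ]; exact_mod_cast h3
  have hδ0 : δ ≠ 0 := ne_of_gt hδpos
  obtain ⟨n', hn'⟩ : δ ∣ (n : ℤ) := Int.gcd_dvd_left _ _
  obtain ⟨χ', hχ'⟩ : δ ∣ χ := Int.gcd_dvd_right _ _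
  have hnpos : (0 : ℤ) < (n : ℤ) := by exact_mod_cast Nat.lt_of_lt_of_le Nat.zero_lt_one hn
  have hn'pos : 0 < n' := by
    rcases mul_pos_iff.mp (hn' ▸ hnpos) with ⟨_, h⟩ | ⟨h, _⟩
    · exact h
    · exact absurd h (not_lt.mpr hδpos.le)
  have hcop : IsCoprime n' χ' := by
    rw [Int.isCoprime_iff_gcd_eq_one]
    have h1 : n' = (n : ℤ) / δ := by rw [hn']; exact (Int.mul_ediv_cancel_left _ hδ0).symm
    have h2 : χ' = χ / δ := by rw [hχ']; exact (Int.mul_ediv_cancel_left _ hδ0).symm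
    rw [h1, h2, hδ]
    refine Int.gcd_div_gcd_div_gcd ?_
    have h4 := hδpos
    rw [hδ] at h4
    exact_mod_cast h4
  constructor
  · intro h
    obtain ⟨E0, hrk, hdeg⟩ := T.exists_bundle n d hn
    have h0 := h E0 hrk hdeg
    rw [T.riemannRoch, hrk, hdeg] at h0
    have key : (n : ℤ) * s + r * χ = 0 := by rw [hχ]; rw [← hr, ← hs] at h0; linarith [h0]
    have key' : n' * s + r * χ' = 0 := by
      have h3 : δ * (n' * s + r * χ') = 0 := by
        calc δ * (n' * s + r * χ') = (δ * n') * s + r * (δ * χ') := by ring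
        _ = (n : ℤ) * s + r * χ := by rw [← hn', ← hχ']
        _ = 0 := key
      exact (mul_eq_zero.mp h3).resolve_left hδ0
    have hdvd : n' ∣ r * χ' := ⟨-s, by linarith [key']⟩
    obtain ⟨l', hl'⟩ := hcop.dvd_of_dvd_mul_right hdvd
    have hr0 : 0 ≤ r := by rw [hr]; exact_mod_cast Nat.zero_le _
    have hl'nonneg : 0 ≤ l' := by nlinarith [hl', hn'pos]
    refine ⟨l'.toNat, ?_, ?_⟩
    · rw [hδeq, Int.toNat_of_nonneg hl'nonneg, hl', hn']; ring
    · have hseq : n' * s = n' * (-l' * χ') := by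
        have : n' * l' * χ' = r * χ' := by rw [hl']
        nlinarith [key']
      have hsval : s = -l' * χ' := mul_left_cancel₀ (ne_of_gt hn'pos) hseq
      rw [hδeq, Int.toNat_of_nonneg hl'nonneg, hsval, hχ']; ring
  · rintro ⟨l, hl1, hl2⟩
    rw [hδeq] at hl1 hl2
    intro E hrk hdeg
    rw [T.riemannRoch, hrk, hdeg, ← hr, ← hs]
    have key : (n : ℤ) * s + r * χ = 0 := by
      have h3 : δ * ((n : ℤ) * s + r * χ) = 0 := by
        calc δ * ((n : ℤ) * s + r * χ) = (n : ℤ) * (s * δ) + (r * δ) * χ := by ring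
        _ = (n : ℤ) * (-(l : ℤ) * χ) + ((l : ℤ) * (n : ℤ)) * χ := by rw [hl1, hl2]
        _ = 0 := by ring
      exact (mul_eq_zero.mp h3).resolve_left hδ0
    rw [hχ] at key; linarith [key]
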